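/- Fix t₀ ∈ ℝ. Let (Δ̃_k)_{k ≥ −1} be real-analytic functions on ℝ with Taylor expansions Δ̃_k(x) = Σ_{n≥0} Δ̃_{k,n} xⁿ at 0, satisfying for all k ≥ 1 the recurrence Δ̃_k(x) = (2 + 2·cos((x + t₀)/2))·Δ̃_{k−1}(x/2) + Δ̃_{k−2}(x/4)·(4·cos((x + t₀)/4) + Δ̃_{k−2}(x/4))·(2·cos((x + t₀)/2) − 2 + Δ̃_{k−1}(x/2)). Fix k ≥ 0 and suppose 0 < δ ≤ 1 and 0 < β ≤ 1 are such that |Δ̃_{k−1,n}| ≤ δ·β^{−n} and |Δ̃_{k,n}| ≤ δ·β^{−n} for every n ≥ 0. Then |Δ̃_{k+1,n}| ≤ 152·δ/(2β)ⁿ for every n ≥ 0. -/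

import Mathlib

open Real Finset
open scoped ContDiff

namespace TMAux

/-- Taylor coefficient magnitude. -/
noncomputable def tc (f : ℝ → ℝ) (n : ℕ) : ℝ := |iteratedDeriv n f 0| / n.factorial

lemma tc_nonneg (f : ℝ → ℝ) (n : ℕ) : 0 ≤ tc f n :=
  div_nonneg (abs_nonneg _) (Nat.cast_nonneg _)

lemma abs_div_fact_eq_tc (f : ℝ → ℝ) (n : ℕ) :
    |iteratedDeriv n f 0 / (n.factorial : ℝ)| = tc f n := by
  rw [abs_div, Nat.abs_cast]; rfl

lemma two_pow_le_fact (n : ℕ) : (2 : ℝ) ^ n ≤ 2 * n.factorial := by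
  have : 2 ^ n ≤ 2 * n.factorial := by
    induction n with
    | zero => norm_num
    | succ n ih =>
      rcases Nat.eq_zero_or_pos n with h | h
      · subst h; norm_num
      · calc 2 ^ (n + 1) = 2 * 2 ^ n := by ring
          _ ≤ 2 * (2 * n.factorial) := by omega
          _ ≤ 2 * (n + 1).factorial := by
              rw [Nat.factorial_succ]
              have : 2 * n.factorial ≤ (n + 1) * n.factorial :=
                Nat.mul_le_mul_right _ (by omega)
              omega
  exact_mod_cast this

lemma itd_cos_affine (c d : ℝ) (n : ℕ) :
    iteratedDeriv n (fun x => Real.cos (c * x + d)) =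
      fun x => c ^ n * Real.cos (c * x + d + n * (Real.pi / 2)) := by
  induction n with
  | zero => funext x; simp
  | succ n ih =>
    funext x
    rw [iteratedDeriv_succ, ih]
    have haff : HasDerivAt (fun y : ℝ => c * y + d + (n : ℝ) * (Real.pi / 2)) c x := by
      have := (((hasDerivAt_id x).const_mul c).add_const
        (d + (n : ℝ) * (Real.pi / 2)) : HasDerivAt (fun y : ℝ => c * y + (d + (n:ℝ) * (Real.pi/2))) (c * 1) x)
      simpa [← add_assoc] using this
    have hd : HasDerivAt (fun y : ℝ => c ^ n * Real.cos (c * y + d + (n : ℝ) * (Real.pi / 2)))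
        (c ^ n * (-Real.sin (c * x + d + (n : ℝ) * (Real.pi / 2)) * c)) x := by
      have := ((Real.hasDerivAt_cos (c * x + d + (n : ℝ) * (Real.pi / 2))).comp x haff).const_mul
        (c ^ n)
      simpa [Function.comp] using this
    rw [hd.deriv]
    have h1 : -Real.sin (c * x + d + (n : ℝ) * (Real.pi / 2)) =
        Real.cos (c * x + d + (n : ℝ) * (Real.pi / 2) + Real.pi / 2) :=
      (Real.cos_add_pi_div_two _).symm
    rw [h1]
    have h2 : c * x + d + (n : ℝ) * (Real.pi / 2) + Real.pi / 2 =
        c * x + d + ((n : ℕ) + 1 : ℕ) * (Real.pi / 2) := by push_cast; ring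
    rw [h2]; ring

lemma abs_itd_cos_affine (c d : ℝ) (n : ℕ) :
    |iteratedDeriv n (fun x => Real.cos (c * x + d)) 0| ≤ |c| ^ n := by
  rw [itd_cos_affine]
  simp only [abs_mul, abs_pow]
  calc |c| ^ n * |Real.cos (c * 0 + d + n * (Real.pi / 2))| ≤ |c| ^ n * 1 := by
        gcongr; exact Real.abs_cos_le_one _
    _ = |c| ^ n := mul_one _

lemma itd_scale (f : ℝ → ℝ) (hf : ContDiff ℝ ω f) (c : ℝ) (n : ℕ) :
    iteratedDeriv n (fun x => f (c * x)) 0 = c ^ n * iteratedDeriv n f 0 := by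
  have h := iteratedDeriv_comp_const_mul (n := n) (hf.of_le le_top) c
  rw [congrFun h 0, mul_zero]

lemma itd_add (n : ℕ) (f g : ℝ → ℝ) (hf : ContDiff ℝ ω f) (hg : ContDiff ℝ ω g) :
    iteratedDeriv n (fun x => f x + g x) 0 = iteratedDeriv n f 0 + iteratedDeriv n g 0 := by
  have h := iteratedDerivWithin_add (Set.mem_univ (0 : ℝ)) uniqueDiffOn_univ
    ((hf.of_le le_top).contDiffWithinAt (s := Set.univ) (x := 0)) ((hg.of_le (le_top : (n : WithTop ℕ∞) ≤ ω)).contDiffWithinAt (s := Set.univ) (x := 0))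
  simpa [iteratedDerivWithin_univ, Pi.add_def] using h

lemma tc_add (n : ℕ) (f g : ℝ → ℝ) (hf : ContDiff ℝ ω f) (hg : ContDiff ℝ ω g) :
    tc (fun x => f x + g x) n ≤ tc f n + tc g n := by
  unfold tc
  rw [itd_add n f g hf hg, ← add_div]
  gcongr
  exact abs_add_le _ _

lemma tc_mul_le (n : ℕ) (f g : ℝ → ℝ) (hf : ContDiff ℝ ω f) (hg : ContDiff ℝ ω g) :
    tc (fun x => f x * g x) n ≤ ∑ i ∈ Finset.range (n + 1), tc f i * tc g (n - i) := by
  have h := norm_iteratedFDeriv_mul_le hf hg (0 : ℝ) (le_top : (n : WithTop ℕ∞) ≤ ω)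
  simp only [norm_iteratedFDeriv_eq_norm_iteratedDeriv, Real.norm_eq_abs] at h
  have key : ∀ i ∈ Finset.range (n + 1),
      ((n.choose i : ℝ) * |iteratedDeriv i f 0| * |iteratedDeriv (n - i) g 0|) / n.factorial
        = tc f i * tc g (n - i) := by
    intro i hi
    have hin : i ≤ n := Nat.lt_succ_iff.mp (Finset.mem_range.mp hi)
    have hfac : ((n.choose i : ℝ)) * i.factorial * (n - i).factorial = n.factorial := by
      exact_mod_cast Nat.choose_mul_factorial_mul_factorial hin
    unfold tc
    rw [← hfac]
    have h1 : (n.choose i : ℝ) ≠ 0 := by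
      exact_mod_cast (Nat.choose_pos hin).ne'
    have h2 : (i.factorial : ℝ) ≠ 0 := by exact_mod_cast i.factorial_pos.ne'
    have h3 : ((n - i).factorial : ℝ) ≠ 0 := by exact_mod_cast (n - i).factorial_pos.ne'
    field_simp
  calc tc (fun x => f x * g x) n
      ≤ (∑ i ∈ Finset.range (n + 1),
          (n.choose i : ℝ) * |iteratedDeriv i f 0| * |iteratedDeriv (n - i) g 0|) / n.factorial := by
        unfold tc
        gcongr
    _ = ∑ i ∈ Finset.range (n + 1), tc f i * tc g (n - i) := by
        rw [Finset.sum_div]; exact Finset.sum_congr rfl key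

lemma geom_le (r : ℝ) (h0 : 0 ≤ r) (h1 : r < 1) (m : ℕ) :
    ∑ i ∈ Finset.range m, r ^ i ≤ (1 - r)⁻¹ := by
  rw [geom_sum_eq (ne_of_lt h1)]
  have heq : (r ^ m - 1) / (r - 1) = (1 - r ^ m) / (1 - r) := by
    rw [← neg_div_neg_eq]; ring_nf
  rw [heq, div_le_iff₀ (by linarith), inv_mul_cancel₀ (by linarith : (1:ℝ) - r ≠ 0)]
  nlinarith [pow_nonneg h0 m]

lemma tc_geoconv (f g : ℝ → ℝ) (hf : ContDiff ℝ ω f) (hg : ContDiff ℝ ω g)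
    (a b r u : ℝ) (ha : 0 ≤ a) (hb : 0 ≤ b) (hu : 0 ≤ u) (hr0 : 0 ≤ r) (hr1 : r < 1)
    (hfb : ∀ i, tc f i ≤ a * r ^ i * u ^ i) (hgb : ∀ i, tc g i ≤ b * u ^ i) (n : ℕ) :
    tc (fun x => f x * g x) n ≤ a * b * (1 - r)⁻¹ * u ^ n := by
  calc tc (fun x => f x * g x) n
      ≤ ∑ i ∈ Finset.range (n + 1), tc f i * tc g (n - i) := tc_mul_le n f g hf hg
    _ ≤ ∑ i ∈ Finset.range (n + 1), (a * r ^ i * u ^ i) * (b * u ^ (n - i)) := by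
        apply Finset.sum_le_sum
        intro i _
        exact mul_le_mul (hfb i) (hgb (n - i)) (tc_nonneg _ _)
          (by positivity)
    _ = (a * b * u ^ n) * ∑ i ∈ Finset.range (n + 1), r ^ i := by
        rw [Finset.mul_sum]
        apply Finset.sum_congr rfl
        intro i hi
        have hin : i ≤ n := Nat.lt_succ_iff.mp (Finset.mem_range.mp hi)
        have : u ^ i * u ^ (n - i) = u ^ n := by
          rw [← pow_add]; congr 1; omega
        calc (a * r ^ i * u ^ i) * (b * u ^ (n - i))
            = a * b * (u ^ i * u ^ (n - i)) * r ^ i := by ring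
          _ = a * b * u ^ n * r ^ i := by rw [this]
    _ ≤ (a * b * u ^ n) * (1 - r)⁻¹ := by
        apply mul_le_mul_of_nonneg_left (geom_le r hr0 hr1 _) (by positivity)
    _ = a * b * (1 - r)⁻¹ * u ^ n := by ring

lemma itd_const_add (n : ℕ) (hn : 0 < n) (c : ℝ) (f : ℝ → ℝ) :
    iteratedDeriv n (fun x => c + f x) 0 = iteratedDeriv n f 0 := by
  have h := iteratedDerivWithin_const_add (s := Set.univ) (x := 0) hn c (f := f)
  simpa [iteratedDerivWithin_univ] using h

lemma itd_const_mul' (n : ℕ) (c : ℝ) (f : ℝ → ℝ) (hf : ContDiff ℝ ω f) :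
    iteratedDeriv n (fun x => c * f x) 0 = c * iteratedDeriv n f 0 := by
  have h := iteratedDerivWithin_const_mul (Set.mem_univ (0 : ℝ)) uniqueDiffOn_univ c
    ((hf.of_le (le_top : (n : WithTop ℕ∞) ≤ ω)).contDiffWithinAt (s := Set.univ) (x := 0))
  simpa [iteratedDerivWithin_univ] using h

end TMAux

namespace TMAux

lemma main_est (δ u : ℝ) (A B C E F : ℝ → ℝ)
    (hAc : ContDiff ℝ ω A) (hBc : ContDiff ℝ ω B) (hCc : ContDiff ℝ ω C)
    (hEc : ContDiff ℝ ω E) (hFc : ContDiff ℝ ω F)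
    (hδ0 : 0 ≤ δ) (hδ1 : δ ≤ 1) (hu : (1:ℝ)/2 ≤ u)
    (hAb : ∀ m, tc A m ≤ 4 * (1/2) ^ m * u ^ m)
    (hBb : ∀ m, tc B m ≤ δ * u ^ m)
    (hCb : ∀ m, tc C m ≤ δ * (1/2) ^ m * u ^ m)
    (hEb : ∀ m, tc E m ≤ 8 * (1/4) ^ m * u ^ m)
    (hFb : ∀ m, tc F m ≤ 4 * (1/2) ^ m * u ^ m) (n : ℕ) :
    tc (fun x => A x * B x + C x * (E x * (F x + B x) + C x * (F x + B x))) n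
      ≤ 136 * δ * u ^ n := by
  have hu0 : (0:ℝ) < u := by linarith
  have hQc : ContDiff ℝ ω (fun x => F x + B x) := hFc.add hBc
  have hQb : ∀ m, tc (fun x => F x + B x) m ≤ 5 * u ^ m := by
    intro m
    have h1 := tc_add m F B hFc hBc
    have h2 : ((1:ℝ)/2) ^ m ≤ 1 := pow_le_one₀ (by norm_num) (by norm_num)
    have h3 : (0:ℝ) ≤ u ^ m := by positivity
    nlinarith [hFb m, hBb m]
  have hEQc : ContDiff ℝ ω (fun x => E x * (F x + B x)) := hEc.mul hQc
  have hCQc : ContDiff ℝ ω (fun x => C x * (F x + B x)) := hCc.mul hQc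
  have hRc : ContDiff ℝ ω (fun x => E x * (F x + B x) + C x * (F x + B x)) := hEQc.add hCQc
  have hEQ := tc_geoconv E _ hEc hQc 8 5 (1/4) u (by norm_num) (by norm_num) hu0.le
    (by norm_num) (by norm_num) hEb hQb
  have hCQ := tc_geoconv C _ hCc hQc δ 5 (1/2) u hδ0 (by norm_num) hu0.le
    (by norm_num) (by norm_num) hCb hQb
  have hRb : ∀ m, tc (fun x => E x * (F x + B x) + C x * (F x + B x)) m
      ≤ (190/3) * u ^ m := by
    intro m
    have h1 := tc_add m _ _ hEQc hCQc
    have h3 : (0:ℝ) ≤ u ^ m := by positivity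
    nlinarith [hEQ m, hCQ m]
  have hT := tc_geoconv C _ hCc hRc δ (190/3) (1/2) u hδ0 (by norm_num) hu0.le
    (by norm_num) (by norm_num) hCb hRb n
  have hP := tc_geoconv A B hAc hBc 4 δ (1/2) u (by norm_num) hδ0 hu0.le
    (by norm_num) (by norm_num) hAb hBb n
  have hsum := tc_add n _ _ (hAc.mul hBc) (hCc.mul hRc)
  have h3 : (0:ℝ) ≤ u ^ n := by positivity
  nlinarith [hT, hP, hsum]

end TMAux


set_option maxHeartbeats 1000000 in


/-- one step of coefficient control for the recentered error
recurrence with shift `t₀`. Here `D j = Δ̃_{j-1}` (so `D 0 = Δ̃_{-1}`), and the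
`n`-th Taylor coefficient at `0` of `D j` is `iteratedDeriv n (D j) 0 / n!`. -/
theorem thueMorse_model_step_shifted (t₀ : ℝ) (D : ℕ → ℝ → ℝ)
    (han : ∀ j : ℕ, ∀ x : ℝ, AnalyticAt ℝ (D j) x)
    (hrec : ∀ j : ℕ, 2 ≤ j → ∀ x : ℝ,
      D j x = (2 + 2 * Real.cos ((x + t₀) / 2)) * D (j - 1) (x / 2) +
        D (j - 2) (x / 4) * (4 * Real.cos ((x + t₀) / 4) + D (j - 2) (x / 4)) *
          (2 * Real.cos ((x + t₀) / 2) - 2 + D (j - 1) (x / 2)))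
    (k : ℕ) (δ β : ℝ) (hδ0 : 0 < δ) (hδ1 : δ ≤ 1) (hβ0 : 0 < β) (hβ1 : β ≤ 1)
    (hbdk : ∀ n : ℕ,
      |iteratedDeriv n (D k) 0 / (n.factorial : ℝ)| ≤ δ * β ^ (-(n : ℤ)))
    (hbdk1 : ∀ n : ℕ,
      |iteratedDeriv n (D (k + 1)) 0 / (n.factorial : ℝ)| ≤ δ * β ^ (-(n : ℤ))) :
    ∀ n : ℕ,
      |iteratedDeriv n (D (k + 2)) 0 / (n.factorial : ℝ)| ≤ 152 * δ / (2 * β) ^ n := by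
  open TMAux in
  open scoped ContDiff in
  intro n
  have hDc : ∀ j, ContDiff ℝ ω (D j) := fun j =>
    contDiff_iff_contDiffAt.mpr fun x => (han j x).contDiffAt
  set u : ℝ := (2 * β)⁻¹ with hu_def
  have hu0 : (0:ℝ) < u := by rw [hu_def]; positivity
  have hu : (1:ℝ)/2 ≤ u := by
    rw [hu_def, ← one_div]
    exact one_div_le_one_div_of_le (by linarith) (by linarith)
  have hupow : ∀ m : ℕ, u ^ m = (2⁻¹:ℝ) ^ m * (β ^ m)⁻¹ := by
    intro m; rw [hu_def, mul_inv, mul_pow]; congr 1; exact inv_pow β m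
  have hfact : ∀ m : ℕ, ((1:ℝ) / m.factorial) ≤ 2 * u ^ m := by
    intro m
    have h1 := TMAux.two_pow_le_fact m
    have h2 : ((1:ℝ)/2) ^ m ≤ u ^ m := pow_le_pow_left₀ (by norm_num) hu m
    have h4 : (0:ℝ) < (m.factorial : ℝ) := by exact_mod_cast m.factorial_pos
    have h5 : ((1:ℝ)/2) ^ m * (2:ℝ) ^ m = 1 := by rw [← mul_pow]; norm_num
    have h6 := mul_le_mul_of_nonneg_left h1
      (le_of_lt (pow_pos (by norm_num : (0:ℝ) < 1/2) m))
    have h7 : (1:ℝ)/m.factorial ≤ 2 * ((1:ℝ)/2) ^ m := by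
      rw [div_le_iff₀ h4]; nlinarith
    nlinarith [pow_pos (show (0:ℝ) < 1/2 by norm_num) m]
  -- cosine pieces
  have hcos2 : ContDiff ℝ ω (fun x : ℝ => Real.cos (2⁻¹ * x + t₀ / 2)) := by
    exact Real.contDiff_cos.comp ((contDiff_const.mul contDiff_id).add contDiff_const)
  have hcos4 : ContDiff ℝ ω (fun x : ℝ => Real.cos (4⁻¹ * x + t₀ / 4)) := by
    exact Real.contDiff_cos.comp ((contDiff_const.mul contDiff_id).add contDiff_const)
  have hAc : ContDiff ℝ ω (fun x : ℝ => 2 + 2 * Real.cos (2⁻¹ * x + t₀ / 2)) :=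
    contDiff_const.add (contDiff_const.mul hcos2)
  have hBc : ContDiff ℝ ω (fun x : ℝ => D (k + 1) (2⁻¹ * x)) :=
    (hDc (k + 1)).comp (contDiff_const.mul contDiff_id)
  have hCc : ContDiff ℝ ω (fun x : ℝ => D k (4⁻¹ * x)) :=
    (hDc k).comp (contDiff_const.mul contDiff_id)
  have hEc : ContDiff ℝ ω (fun x : ℝ => 4 * Real.cos (4⁻¹ * x + t₀ / 4)) :=
    contDiff_const.mul hcos4
  have hFc : ContDiff ℝ ω (fun x : ℝ => 2 * Real.cos (2⁻¹ * x + t₀ / 2) - 2) :=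
    (contDiff_const.mul hcos2).sub contDiff_const
  -- coefficient bounds for the pieces
  have hDk : ∀ m : ℕ, tc (D k) m ≤ δ * (β ^ m)⁻¹ := by
    intro m
    have h := hbdk m
    rwa [abs_div_fact_eq_tc, zpow_neg, zpow_natCast] at h
  have hDk1 : ∀ m : ℕ, tc (D (k + 1)) m ≤ δ * (β ^ m)⁻¹ := by
    intro m
    have h := hbdk1 m
    rwa [abs_div_fact_eq_tc, zpow_neg, zpow_natCast] at h
  have hBb : ∀ m, tc (fun x : ℝ => D (k + 1) (2⁻¹ * x)) m ≤ δ * u ^ m := by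
    intro m
    have hs : tc (fun x : ℝ => D (k + 1) (2⁻¹ * x)) m = (2⁻¹:ℝ) ^ m * tc (D (k + 1)) m := by
      unfold tc
      rw [itd_scale (D (k + 1)) (hDc (k + 1)) 2⁻¹ m, abs_mul, abs_pow,
        abs_of_nonneg (by norm_num : (0:ℝ) ≤ (2⁻¹:ℝ))]
      ring
    rw [hs, hupow]
    calc (2⁻¹:ℝ) ^ m * tc (D (k + 1)) m ≤ (2⁻¹:ℝ) ^ m * (δ * (β ^ m)⁻¹) :=
          mul_le_mul_of_nonneg_left (hDk1 m) (by positivity)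
      _ = δ * ((2⁻¹:ℝ) ^ m * (β ^ m)⁻¹) := by ring
  have hCb : ∀ m, tc (fun x : ℝ => D k (4⁻¹ * x)) m ≤ δ * (1/2) ^ m * u ^ m := by
    intro m
    have hs : tc (fun x : ℝ => D k (4⁻¹ * x)) m = (4⁻¹:ℝ) ^ m * tc (D k) m := by
      unfold tc
      rw [itd_scale (D k) (hDc k) 4⁻¹ m, abs_mul, abs_pow,
        abs_of_nonneg (by norm_num : (0:ℝ) ≤ (4⁻¹:ℝ))]
      ring
    have h4 : (4⁻¹:ℝ) ^ m = (1/2:ℝ) ^ m * (2⁻¹:ℝ) ^ m := by rw [← mul_pow]; norm_num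
    rw [hs, hupow, h4]
    calc (1/2:ℝ) ^ m * (2⁻¹:ℝ) ^ m * tc (D k) m
        ≤ (1/2:ℝ) ^ m * (2⁻¹:ℝ) ^ m * (δ * (β ^ m)⁻¹) :=
          mul_le_mul_of_nonneg_left (hDk m) (by positivity)
      _ = δ * (1/2) ^ m * ((2⁻¹:ℝ) ^ m * (β ^ m)⁻¹) := by ring
  have hAb : ∀ m, tc (fun x : ℝ => 2 + 2 * Real.cos (2⁻¹ * x + t₀ / 2)) m
      ≤ 4 * (1/2) ^ m * u ^ m := by
    intro m
    match m with
    | 0 =>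
      have h1 : tc (fun x : ℝ => 2 + 2 * Real.cos (2⁻¹ * x + t₀ / 2)) 0
          = |2 + 2 * Real.cos (2⁻¹ * (0:ℝ) + t₀ / 2)| := by
        unfold tc; simp
      rw [h1]
      have hc := Real.abs_cos_le_one (2⁻¹ * (0:ℝ) + t₀ / 2)
      have := abs_le.mp hc
      simp only [pow_zero, mul_one]
      rw [abs_le]
      constructor <;> nlinarith
    | (j+1) =>
      have h0 : iteratedDeriv (j+1) (fun x : ℝ => 2 + 2 * Real.cos (2⁻¹ * x + t₀ / 2)) 0
          = 2 * iteratedDeriv (j+1) (fun x : ℝ => Real.cos (2⁻¹ * x + t₀ / 2)) 0 := by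
        rw [itd_const_add (j+1) j.succ_pos 2]
        exact itd_const_mul' (j+1) 2 _ hcos2
      unfold tc
      rw [h0, abs_mul, abs_two]
      have hcb := abs_itd_cos_affine 2⁻¹ (t₀ / 2) (j+1)
      rw [abs_of_nonneg (by norm_num : (0:ℝ) ≤ (2⁻¹:ℝ))] at hcb
      have hf := hfact (j+1)
      have h4 : (0:ℝ) < ((j+1).factorial : ℝ) := by exact_mod_cast (j+1).factorial_pos
      calc 2 * |iteratedDeriv (j+1) (fun x : ℝ => Real.cos (2⁻¹ * x + t₀ / 2)) 0|
            / ((j+1).factorial : ℝ)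
          ≤ 2 * (2⁻¹:ℝ) ^ (j+1) / ((j+1).factorial : ℝ) := by gcongr
        _ = 2 * (2⁻¹:ℝ) ^ (j+1) * (1 / ((j+1).factorial : ℝ)) := by ring
        _ ≤ 2 * (2⁻¹:ℝ) ^ (j+1) * (2 * u ^ (j+1)) :=
            mul_le_mul_of_nonneg_left hf (by positivity)
        _ = 4 * (1/2:ℝ) ^ (j+1) * u ^ (j+1) := by
            rw [show (2⁻¹:ℝ) = 1/2 by norm_num]; ring
  have hEb : ∀ m, tc (fun x : ℝ => 4 * Real.cos (4⁻¹ * x + t₀ / 4)) m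
      ≤ 8 * (1/4) ^ m * u ^ m := by
    intro m
    unfold tc
    rw [itd_const_mul' m 4 _ hcos4, abs_mul,
      abs_of_nonneg (by norm_num : (0:ℝ) ≤ (4:ℝ))]
    have hcb := abs_itd_cos_affine 4⁻¹ (t₀ / 4) m
    rw [abs_of_nonneg (by norm_num : (0:ℝ) ≤ (4⁻¹:ℝ))] at hcb
    have hf := hfact m
    have h4 : (0:ℝ) < (m.factorial : ℝ) := by exact_mod_cast m.factorial_pos
    calc 4 * |iteratedDeriv m (fun x : ℝ => Real.cos (4⁻¹ * x + t₀ / 4)) 0|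
          / (m.factorial : ℝ)
        ≤ 4 * (4⁻¹:ℝ) ^ m / (m.factorial : ℝ) := by gcongr
      _ = 4 * (4⁻¹:ℝ) ^ m * (1 / (m.factorial : ℝ)) := by ring
      _ ≤ 4 * (4⁻¹:ℝ) ^ m * (2 * u ^ m) := mul_le_mul_of_nonneg_left hf (by positivity)
      _ = 8 * (1/4:ℝ) ^ m * u ^ m := by rw [show (4⁻¹:ℝ) = 1/4 by norm_num]; ring
  have hFb : ∀ m, tc (fun x : ℝ => 2 * Real.cos (2⁻¹ * x + t₀ / 2) - 2) m
      ≤ 4 * (1/2) ^ m * u ^ m := by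
    intro m
    match m with
    | 0 =>
      have h1 : tc (fun x : ℝ => 2 * Real.cos (2⁻¹ * x + t₀ / 2) - 2) 0
          = |2 * Real.cos (2⁻¹ * (0:ℝ) + t₀ / 2) - 2| := by
        unfold tc; simp
      rw [h1]
      have hc := Real.abs_cos_le_one (2⁻¹ * (0:ℝ) + t₀ / 2)
      have := abs_le.mp hc
      simp only [pow_zero, mul_one]
      rw [abs_le]
      constructor <;> nlinarith
    | (j+1) =>
      have hFeq : (fun x : ℝ => 2 * Real.cos (2⁻¹ * x + t₀ / 2) - 2)
          = (fun x : ℝ => (-2:ℝ) + 2 * Real.cos (2⁻¹ * x + t₀ / 2)) := by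
        funext x; ring
      rw [hFeq]
      have h0 : iteratedDeriv (j+1) (fun x : ℝ => (-2:ℝ) + 2 * Real.cos (2⁻¹ * x + t₀ / 2)) 0
          = 2 * iteratedDeriv (j+1) (fun x : ℝ => Real.cos (2⁻¹ * x + t₀ / 2)) 0 := by
        rw [itd_const_add (j+1) j.succ_pos (-2)]
        exact itd_const_mul' (j+1) 2 _ hcos2
      unfold tc
      rw [h0, abs_mul, abs_two]
      have hcb := abs_itd_cos_affine 2⁻¹ (t₀ / 2) (j+1)
      rw [abs_of_nonneg (by norm_num : (0:ℝ) ≤ (2⁻¹:ℝ))] at hcb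
      have hf := hfact (j+1)
      have h4 : (0:ℝ) < ((j+1).factorial : ℝ) := by exact_mod_cast (j+1).factorial_pos
      calc 2 * |iteratedDeriv (j+1) (fun x : ℝ => Real.cos (2⁻¹ * x + t₀ / 2)) 0|
            / ((j+1).factorial : ℝ)
          ≤ 2 * (2⁻¹:ℝ) ^ (j+1) / ((j+1).factorial : ℝ) := by gcongr
        _ = 2 * (2⁻¹:ℝ) ^ (j+1) * (1 / ((j+1).factorial : ℝ)) := by ring
        _ ≤ 2 * (2⁻¹:ℝ) ^ (j+1) * (2 * u ^ (j+1)) :=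
            mul_le_mul_of_nonneg_left hf (by positivity)
        _ = 4 * (1/2:ℝ) ^ (j+1) * u ^ (j+1) := by
            rw [show (2⁻¹:ℝ) = 1/2 by norm_num]; ring
  -- the recurrence as a function identity
  have hfun : D (k + 2) = fun x : ℝ =>
      (fun x : ℝ => 2 + 2 * Real.cos (2⁻¹ * x + t₀ / 2)) x
        * (fun x : ℝ => D (k + 1) (2⁻¹ * x)) x
      + (fun x : ℝ => D k (4⁻¹ * x)) x
        * ((fun x : ℝ => 4 * Real.cos (4⁻¹ * x + t₀ / 4)) x
            * ((fun x : ℝ => 2 * Real.cos (2⁻¹ * x + t₀ / 2) - 2) x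
                + (fun x : ℝ => D (k + 1) (2⁻¹ * x)) x)
          + (fun x : ℝ => D k (4⁻¹ * x)) x
            * ((fun x : ℝ => 2 * Real.cos (2⁻¹ * x + t₀ / 2) - 2) x
                + (fun x : ℝ => D (k + 1) (2⁻¹ * x)) x)) := by
    funext x
    rw [hrec (k + 2) (by omega) x]
    simp only [show k + 2 - 1 = k + 1 from rfl, show k + 2 - 2 = k from rfl]
    rw [show (x + t₀) / 2 = 2⁻¹ * x + t₀ / 2 by ring,
      show (x + t₀) / 4 = 4⁻¹ * x + t₀ / 4 by ring,
      show x / 2 = 2⁻¹ * x by ring, show x / 4 = 4⁻¹ * x by ring]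
    ring
  have hmain := main_est δ u
    (fun x : ℝ => 2 + 2 * Real.cos (2⁻¹ * x + t₀ / 2))
    (fun x : ℝ => D (k + 1) (2⁻¹ * x))
    (fun x : ℝ => D k (4⁻¹ * x))
    (fun x : ℝ => 4 * Real.cos (4⁻¹ * x + t₀ / 4))
    (fun x : ℝ => 2 * Real.cos (2⁻¹ * x + t₀ / 2) - 2)
    hAc hBc hCc hEc hFc hδ0.le hδ1 hu hAb hBb hCb hEb hFb n
  rw [abs_div_fact_eq_tc, hfun]
  refine le_trans hmain ?_
  have hun : u ^ n = ((2 * β) ^ n)⁻¹ := by rw [hu_def, inv_pow]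
  rw [hun, div_eq_mul_inv]
  have hpos : (0:ℝ) < ((2 * β) ^ n)⁻¹ := by positivity
  nlinarith
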